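/- For all real numbers a and x and every natural number n, dⁿ/dxⁿ e^{a x³} = H_n^{(3)}(3a x², 3a x, a) · e^{a x³}, where H_n^{(3)} is the three-variable Hermite–Kampé de Fériet polynomial. -/

import Mathlib

open Finset

/-- The two-variable Hermite–Kampé de Fériet polynomials. -/
noncomputable def hermiteKdF2 (n : ℕ) (x y : ℝ) : ℝ :=
  (n.factorial : ℝ) * ∑ k ∈ Finset.range (n / 2 + 1),
    x ^ (n - 2 * k) * y ^ k / ((n - 2 * k).factorial * k.factorial)

/-- The three-variable Hermite–Kampé de Fériet polynomials. -/
noncomputable def hermiteKdF3 (n : ℕ) (x y z : ℝ) : ℝ :=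
  (n.factorial : ℝ) * ∑ k ∈ Finset.range (n / 3 + 1),
    z ^ k * hermiteKdF2 (n - 3 * k) x y / ((n - 3 * k).factorial * k.factorial)

/-- coefficient of the flattened double sum -/
noncomputable def hkCo (n k j : ℕ) : ℝ :=
  (n.factorial : ℝ) / ((n - 3*k - 2*j).factorial * j.factorial * k.factorial)

/-- term of the flattened double sum for `hermiteKdF3 n (3ax²) (3ax) a` -/
noncomputable def hkTm (a x : ℝ) (n k j : ℕ) : ℝ :=
  if 3*k + 2*j ≤ n then
    hkCo n k j * (3*a)^(n - 3*k - 2*j + j) * a^k * x^(2*(n - 3*k - 2*j) + j)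
  else 0

noncomputable def hkDA (a x : ℝ) (n k j : ℕ) : ℝ :=
  if 3*k + 2*j ≤ n then
    hkCo n k j * (3*a)^(n - 3*k - 2*j + j) * a^k *
      (((2*(n - 3*k - 2*j) : ℕ) : ℝ) * x^(2*(n - 3*k - 2*j) + j - 1))
  else 0

noncomputable def hkDB (a x : ℝ) (n k j : ℕ) : ℝ :=
  if 3*k + 2*j ≤ n then
    hkCo n k j * (3*a)^(n - 3*k - 2*j + j) * a^k *
      ((j : ℝ) * x^(2*(n - 3*k - 2*j) + j - 1))
  else 0

noncomputable def hkF (a x : ℝ) (n : ℕ) : ℝ :=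
  ∑ k ∈ Finset.range (n+1), ∑ j ∈ Finset.range (n+1), hkTm a x n k j

lemma fac_ne (m : ℕ) : ((m.factorial : ℝ)) ≠ 0 := by
  exact_mod_cast m.factorial_ne_zero

lemma h3_eq (a x : ℝ) (n : ℕ) :
    hermiteKdF3 n (3*a*x^2) (3*a*x) a = hkF a x n := by
  rw [hermiteKdF3, hkF, Finset.mul_sum]
  rw [← Finset.sum_subset (Finset.range_subset_range.mpr (by omega : n/3 + 1 ≤ n + 1))
    (fun k _ hk => ?_)]
  · refine Finset.sum_congr rfl fun k hk => ?_
    have hk3 : 3 * k ≤ n := by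
      simp only [Finset.mem_range] at hk; omega
    rw [← Finset.sum_subset (Finset.range_subset_range.mpr
      (by omega : (n - 3*k)/2 + 1 ≤ n + 1)) (fun j _ hj => ?_)]
    · rw [hermiteKdF2]
      simp only [Finset.mul_sum, Finset.sum_div]
      refine Finset.sum_congr rfl fun j hj => ?_
      simp only [Finset.mem_range] at hj
      have hj2 : 2 * j ≤ n - 3*k := by omega
      have hg : 3*k + 2*j ≤ n := by omega
      rw [hkTm, if_pos hg, hkCo]
      have e1 : (3*a*x^2) ^ (n - 3*k - 2*j) = (3*a)^(n - 3*k - 2*j) * x^(2*(n - 3*k - 2*j)) := by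
        rw [mul_pow, ← pow_mul]
      have e2 : (3*a*x) ^ j = (3*a)^j * x^j := mul_pow _ _ _
      rw [e1, e2, pow_add, pow_add]
      have f0 : ((n - 3*k).factorial : ℝ) ≠ 0 := fac_ne _
      have f1 : ((n - 3*k - 2*j).factorial : ℝ) ≠ 0 := fac_ne _
      have f2 : (j.factorial : ℝ) ≠ 0 := fac_ne _
      have f3 : (k.factorial : ℝ) ≠ 0 := fac_ne _
      field_simp
    · -- j out of range : term is zero
      simp only [Finset.mem_range, not_lt] at hj
      rw [hkTm, if_neg (by omega)]
  · -- k out of range: all terms zero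
    simp only [Finset.mem_range, not_lt] at hk
    apply Finset.sum_eq_zero
    intro j _
    rw [hkTm, if_neg (by omega)]

lemma hasDerivAt_hkTm (a x : ℝ) (n k j : ℕ) :
    HasDerivAt (fun y => hkTm a y n k j) (hkDA a x n k j + hkDB a x n k j) x := by
  by_cases h : 3*k + 2*j ≤ n
  · obtain ⟨m, rfl⟩ : ∃ m, n = 3*k + 2*j + m := ⟨n - (3*k + 2*j), by omega⟩
    simp only [hkTm, hkDA, hkDB, if_pos h,
      show 3*k + 2*j + m - 3*k - 2*j = m from by omega]
    have h1 : HasDerivAt (fun y : ℝ =>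
        hkCo (3*k + 2*j + m) k j * (3*a)^(m + j) * a^k * y^(2*m + j))
        (hkCo (3*k + 2*j + m) k j * (3*a)^(m + j) * a^k *
          ((2*m + j : ℕ) * x^(2*m + j - 1))) x :=
      (hasDerivAt_pow _ x).const_mul _
    convert h1 using 1
    push_cast
    ring
  · simp only [hkTm, hkDA, hkDB, if_neg h]
    simpa using hasDerivAt_const x (0:ℝ)

lemma hasDerivAt_hkF (a x : ℝ) (n : ℕ) :
    HasDerivAt (fun y => hkF a y n)
      (∑ k ∈ Finset.range (n+1), ∑ j ∈ Finset.range (n+1),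
        (hkDA a x n k j + hkDB a x n k j)) x := by
  unfold hkF
  exact HasDerivAt.fun_sum fun k _ => HasDerivAt.fun_sum fun j _ => hasDerivAt_hkTm a x n k j

lemma term_key (a x : ℝ) (n k j : ℕ) :
    hkTm a x (n+1) k j = 3*a*x^2 * hkTm a x n k j
      + (if j = 0 then 0 else hkDA a x n k (j-1))
      + (if k = 0 then 0 else hkDB a x n (k-1) (j+1)) := by
  by_cases hg : 3*k + 2*j ≤ n + 1
  · obtain ⟨M, hM⟩ : ∃ M, n + 1 = 3*k + 2*j + M := ⟨n + 1 - (3*k + 2*j), by omega⟩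
    have hMr : (n:ℝ) + 1 = 3*(k:ℝ) + 2*(j:ℝ) + (M:ℝ) := by exact_mod_cast hM
    set R : ℝ := (n.factorial : ℝ) / ((M.factorial : ℝ) * j.factorial * k.factorial) *
      (3*a)^(M + j) * a^k * x^(2*M + j) with hR
    have hL : hkTm a x (n+1) k j = ((n:ℝ)+1) * R := by
      rw [hkTm, if_pos hg, hkCo, show n + 1 - 3*k - 2*j = M from by omega,
        Nat.factorial_succ, hR]
      push_cast
      field_simp
    have h1 : 3*a*x^2 * hkTm a x n k j = (M:ℝ) * R := by
      rcases M with _ | M'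
      · rw [hkTm, if_neg (by omega)]
        simp
      · rw [hkTm, if_pos (by omega : 3*k + 2*j ≤ n), hkCo,
          show n - 3*k - 2*j = M' from by omega, hR]
        have := fac_ne M'
        have := fac_ne (M'+1)
        have := fac_ne j
        have := fac_ne k
        field_simp
        push_cast [Nat.factorial_succ]
        ring
    have h2 : (if j = 0 then (0:ℝ) else hkDA a x n k (j-1)) = 2*(j:ℝ) * R := by
      rcases j with _ | j'
      · simp
      · rw [if_neg (by omega), hkDA, if_pos (by omega : 3*k + 2*(j'+1-1) ≤ n)]
        rw [show j' + 1 - 1 = j' from rfl,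
          show n - 3*k - 2*j' = M + 1 from by omega, hkCo,
          show n - 3*k - 2*j' = M + 1 from by omega,
          show 2*(M+1) + j' - 1 = 2*M + (j'+1) from by omega, hR]
        have := fac_ne M
        have := fac_ne (M+1)
        have := fac_ne j'
        have := fac_ne (j'+1)
        have := fac_ne k
        field_simp
        push_cast [Nat.factorial_succ]
        ring
    have h3 : (if k = 0 then (0:ℝ) else hkDB a x n (k-1) (j+1)) = 3*(k:ℝ) * R := by
      rcases k with _ | k'
      · simp
      · rw [if_neg (by omega), hkDB, if_pos (by omega : 3*(k'+1-1) + 2*(j+1) ≤ n)]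
        rw [show k' + 1 - 1 = k' from rfl,
          show n - 3*k' - 2*(j+1) = M from by omega, hkCo,
          show n - 3*k' - 2*(j+1) = M from by omega,
          show 2*M + (j+1) - 1 = 2*M + j from by omega, hR]
        have := fac_ne M
        have := fac_ne j
        have := fac_ne (j+1)
        have := fac_ne k'
        have := fac_ne (k'+1)
        field_simp
        push_cast [Nat.factorial_succ]
        ring
    rw [hL, h1, h2, h3]
    linear_combination R * hMr
  · rw [hkTm, if_neg hg, hkTm, if_neg (by omega)]
    have h2 : (if j = 0 then (0:ℝ) else hkDA a x n k (j-1)) = 0 := by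
      rcases j with _ | j'
      · simp
      · rw [if_neg (by omega), hkDA]
        by_cases hg' : 3*k + 2*(j'+1-1) ≤ n
        · rw [if_pos hg', show j' + 1 - 1 = j' from rfl,
            show n - 3*k - 2*j' = 0 from by omega]
          simp
        · rw [if_neg hg']
    have h3 : (if k = 0 then (0:ℝ) else hkDB a x n (k-1) (j+1)) = 0 := by
      rcases k with _ | k'
      · simp
      · rw [if_neg (by omega), hkDB, if_neg (by omega)]
    rw [h2, h3]
    simp

lemma hkDA_right (a x : ℝ) (n k : ℕ) : hkDA a x n k n = 0 := by
  rw [hkDA]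
  by_cases h : 3*k + 2*n ≤ n
  · rw [if_pos h, show n - 3*k - 2*n = 0 from by omega]
    simp
  · rw [if_neg h]

lemma hkDB_zero (a x : ℝ) (n k : ℕ) : hkDB a x n k 0 = 0 := by
  rw [hkDB]
  by_cases h : 3*k + 2*0 ≤ n
  · rw [if_pos h]; simp
  · rw [if_neg h]

lemma hkDB_top (a x : ℝ) (n k : ℕ) : hkDB a x n k (n+1) = 0 := by
  rw [hkDB, if_neg (by omega)]

lemma hkDB_right (a x : ℝ) (n j : ℕ) : hkDB a x n n j = 0 := by
  rw [hkDB]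
  by_cases h : 3*n + 2*j ≤ n
  · have hj : j = 0 := by omega
    subst hj
    rw [if_pos h]; simp
  · rw [if_neg h]

lemma hkTm_top₁ (a x : ℝ) (n j : ℕ) : hkTm a x (n+1) (n+1) j = 0 := by
  rw [hkTm, if_neg (by omega)]

lemma hkTm_top₂ (a x : ℝ) (n k : ℕ) : hkTm a x (n+1) k (n+1) = 0 := by
  rw [hkTm, if_neg (by omega)]

lemma sum_key (a x : ℝ) (n : ℕ) :
    hkF a x (n+1) = 3*a*x^2 * hkF a x n
      + ∑ k ∈ Finset.range (n+1), ∑ j ∈ Finset.range (n+1),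
        (hkDA a x n k j + hkDB a x n k j) := by
  have hshrink : hkF a x (n+1)
      = ∑ k ∈ Finset.range (n+1), ∑ j ∈ Finset.range (n+1), hkTm a x (n+1) k j := by
    rw [hkF, Finset.sum_range_succ, Finset.sum_eq_zero (fun j _ => hkTm_top₁ a x n j),
      add_zero]
    refine Finset.sum_congr rfl fun k _ => ?_
    rw [Finset.sum_range_succ, hkTm_top₂, add_zero]
  rw [hshrink]
  have hsplit : ∀ k, ∑ j ∈ Finset.range (n+1), hkTm a x (n+1) k j
      = ∑ j ∈ Finset.range (n+1), (3*a*x^2 * hkTm a x n k j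
        + ((if j = 0 then 0 else hkDA a x n k (j-1))
          + (if k = 0 then 0 else hkDB a x n (k-1) (j+1)))) :=
    fun k => Finset.sum_congr rfl fun j _ => by rw [term_key]; ring
  simp only [hsplit, Finset.sum_add_distrib]
  have P1 : ∑ k ∈ Finset.range (n+1), ∑ j ∈ Finset.range (n+1),
      3*a*x^2 * hkTm a x n k j = 3*a*x^2 * hkF a x n := by
    rw [hkF, Finset.mul_sum]
    exact Finset.sum_congr rfl fun k _ => (Finset.mul_sum _ _ _).symm
  have P2 : ∑ k ∈ Finset.range (n+1), ∑ j ∈ Finset.range (n+1),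
      (if j = 0 then (0:ℝ) else hkDA a x n k (j-1))
      = ∑ k ∈ Finset.range (n+1), ∑ j ∈ Finset.range (n+1), hkDA a x n k j := by
    refine Finset.sum_congr rfl fun k _ => ?_
    rw [Finset.sum_range_succ' (fun j => if j = 0 then (0:ℝ) else hkDA a x n k (j-1))]
    simp only [Nat.succ_ne_zero, if_false, Nat.add_sub_cancel, eq_self_iff_true,
      if_true, add_zero]
    rw [Finset.sum_range_succ, hkDA_right, add_zero]
  have P3 : ∑ k ∈ Finset.range (n+1), ∑ j ∈ Finset.range (n+1),
      (if k = 0 then (0:ℝ) else hkDB a x n (k-1) (j+1))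
      = ∑ k ∈ Finset.range (n+1), ∑ j ∈ Finset.range (n+1), hkDB a x n k j := by
    rw [Finset.sum_range_succ' (fun k => ∑ j ∈ Finset.range (n+1),
      (if k = 0 then (0:ℝ) else hkDB a x n (k-1) (j+1)))]
    simp only [Nat.succ_ne_zero, if_false, Nat.add_sub_cancel, eq_self_iff_true,
      if_true, Finset.sum_const_zero, add_zero]
    have inner : ∀ k, ∑ j ∈ Finset.range (n+1), hkDB a x n k (j+1)
        = ∑ j ∈ Finset.range (n+1), hkDB a x n k j := by
      intro k
      have h2 := Finset.sum_range_succ' (fun j => hkDB a x n k j) (n+1)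
      rw [hkDB_zero, add_zero] at h2
      rw [Finset.sum_range_succ, hkDB_top, add_zero] at h2
      exact h2.symm
    simp only [inner]
    conv_rhs => rw [Finset.sum_range_succ]
    rw [Finset.sum_eq_zero (fun j _ => hkDB_right a x n j), add_zero]
  rw [P1, P2, P3]

theorem iteratedDeriv_exp_cube (a x : ℝ) (n : ℕ) :
    iteratedDeriv n (fun t => Real.exp (a * t ^ 3)) x =
      hermiteKdF3 n (3 * a * x ^ 2) (3 * a * x) a * Real.exp (a * x ^ 3) := by
  induction n generalizing x with
  | zero =>
    simp [hermiteKdF3, hermiteKdF2]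
  | succ n ih =>
    rw [iteratedDeriv_succ]
    have hfun : iteratedDeriv n (fun t => Real.exp (a * t ^ 3))
        = fun y => hkF a y n * Real.exp (a * y ^ 3) := by
      funext y; rw [ih y, h3_eq]
    rw [hfun]
    have hE : HasDerivAt (fun y : ℝ => Real.exp (a * y ^ 3))
        (Real.exp (a * x ^ 3) * (a * (3 * x ^ 2))) x := by
      have := ((hasDerivAt_pow 3 x).const_mul a).exp
      simpa using this
    have htot := (hasDerivAt_hkF a x n).fun_mul hE
    rw [htot.deriv, h3_eq, sum_key]
    ring
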